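/- Let P, Q, S be the probability distributions on {0,1} given by P = (1/8, 7/8), Q = (7/8, 1/8), S = (9/16, 7/16) (i.e., P(0) = 1−p, P(1) = p, Q(0) = 1−ε, Q(1) = ε, S(0) = 1−p/2, S(1) = p/2 with p = 7/8 and ε = 1/8). Then the strict inequality D(P‖Q) > D_max(P‖S) + D(S‖Q) holds. -/

import Mathlib

noncomputable section

namespace CIT

/-- A probability distribution on a finite set. -/
def IsDist {X : Type*} [Fintype X] (p : X → ℝ) : Prop :=
  (∀ x, 0 ≤ p x) ∧ ∑ x, p x = 1

/-- Support inclusion `supp p ⊆ supp q`. -/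
def suppLe {X : Type*} (p q : X → ℝ) : Prop := ∀ x, p x ≠ 0 → q x ≠ 0

open Classical in
/-- Relative entropy (base 2), with `0·log 0 = 0`, `+∞` if the support
condition fails. -/
def relEnt {X : Type*} [Fintype X] (p q : X → ℝ) : EReal :=
  if suppLe p q then ((∑ x, p x * Real.logb 2 (p x / q x) : ℝ) : EReal) else ⊤

open Classical in
/-- Max-relative entropy `D_max(p‖q) = log max_{x ∈ supp p} p(x)/q(x)`,
`+∞` if the support condition fails. -/
def dMax {X : Type*} [Fintype X] (p q : X → ℝ) : EReal :=
  if suppLe p q then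
    ((Real.logb 2 (sSup {r : ℝ | ∃ x, p x ≠ 0 ∧ r = p x / q x}) : ℝ) : EReal)
  else ⊤

open Classical in
/-- Rényi relative entropy of order `α` (base 2), with `D_1 := D` and `+∞`
when `α > 1` and the support condition fails. -/
def renyi {X : Type*} [Fintype X] (α : ℝ) (p q : X → ℝ) : EReal :=
  if α = 1 then relEnt p q
  else if 1 < α ∧ ¬ suppLe p q then ⊤
  else (((α - 1)⁻¹ * Real.logb 2 (∑ x, p x ^ α * q x ^ (1 - α)) : ℝ) : EReal)

/-- The `XY`-marginal of a tripartite distribution. -/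
def margXY {X Y Z : Type*} [Fintype Z] (P : X × Y × Z → ℝ) : X × Y → ℝ :=
  fun t => ∑ z, P (t.1, t.2, z)

/-- The `YZ`-marginal of a tripartite distribution. -/
def margYZ {X Y Z : Type*} [Fintype X] (P : X × Y × Z → ℝ) : Y × Z → ℝ :=
  fun t => ∑ x, P (x, t.1, t.2)

/-- The `Y`-marginal of a tripartite distribution. -/
def margY {X Y Z : Type*} [Fintype X] [Fintype Z] (P : X × Y × Z → ℝ) : Y → ℝ :=
  fun y => ∑ x, ∑ z, P (x, y, z)

/-- Conditional mutual information
`I(X:Z|Y)_P = Σ P(x,y,z) log( P(x,y,z)·P_Y(y) / (P_XY(x,y)·P_YZ(y,z)) )`. -/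
def cmi {X Y Z : Type*} [Fintype X] [Fintype Y] [Fintype Z] (P : X × Y × Z → ℝ) : ℝ :=
  ∑ s : X × Y × Z,
    P s * Real.logb 2 (P s * margY P s.2.1 / (margXY P (s.1, s.2.1) * margYZ P (s.2.1, s.2.2)))

/-- A classical channel from `Y` to `W`: a family of conditional distributions. -/
def IsChannel {Y W : Type*} [Fintype W] (R : Y → W → ℝ) : Prop :=
  ∀ y, (∀ w, 0 ≤ R y w) ∧ ∑ w, R y w = 1

/-- Action `(id ⊗ R)` of a channel `R : Y → W` on a joint distribution on `X × Y`. -/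
def applyChan {X Y W : Type*} [Fintype Y] (R : Y → W → ℝ) (P : X × Y → ℝ) : X × W → ℝ :=
  fun t => ∑ y, P (t.1, y) * R y t.2

/-- Action of a channel `R : Y → W` on a distribution on `Y`. -/
def chanOnDist {Y W : Type*} [Fintype Y] (R : Y → W → ℝ) (q : Y → ℝ) : W → ℝ :=
  fun w => ∑ y, q y * R y w

/-- Marginal channel `R_{Y→Y}(y'|y) = Σ_{z'} R(y',z'|y)`. -/
def margChan {Y Y' Z' : Type*} [Fintype Z'] (R : Y → Y' × Z' → ℝ) : Y → Y' → ℝ :=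
  fun y y' => ∑ z', R y (y', z')

end CIT

open CIT in
/-- for `P = (1/8, 7/8)`, `Q = (7/8, 1/8)`, `S = (9/16, 7/16)`
one has `D(P‖Q) > D_max(P‖S) + D(S‖Q)`. -/
theorem relEnt_dMax_triangle_violation
    (P Q S : Fin 2 → ℝ)
    (hP : P = ![1 / 8, 7 / 8]) (hQ : Q = ![7 / 8, 1 / 8]) (hS : S = ![9 / 16, 7 / 16]) :
    dMax P S + relEnt S Q < relEnt P Q := by
  subst hP hQ hS
  have hsupp1 : suppLe (![1 / 8, 7 / 8] : Fin 2 → ℝ) ![9 / 16, 7 / 16] := by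
    intro x _; fin_cases x <;> norm_num
  have hsupp2 : suppLe (![9 / 16, 7 / 16] : Fin 2 → ℝ) ![7 / 8, 1 / 8] := by
    intro x _; fin_cases x <;> norm_num
  have hsupp3 : suppLe (![1 / 8, 7 / 8] : Fin 2 → ℝ) ![7 / 8, 1 / 8] := by
    intro x _; fin_cases x <;> norm_num
  have hset : {r : ℝ | ∃ x, (![1 / 8, 7 / 8] : Fin 2 → ℝ) x ≠ 0 ∧
      r = (![1 / 8, 7 / 8] : Fin 2 → ℝ) x / (![9 / 16, 7 / 16] : Fin 2 → ℝ) x}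
      = {(2/9 : ℝ), 2} := by
    ext r
    constructor
    · rintro ⟨x, hx, rfl⟩
      fin_cases x <;> norm_num
    · rintro (rfl | rfl)
      · exact ⟨0, by norm_num⟩
      · exact ⟨1, by norm_num⟩
  rw [dMax, relEnt, relEnt, if_pos hsupp1, if_pos hsupp2, if_pos hsupp3, hset]
  have hsup : sSup ({(2/9 : ℝ), 2} : Set ℝ) = 2 := by
    rw [csSup_pair]; norm_num
  rw [hsup]
  rw [← EReal.coe_add, EReal.coe_lt_coe_iff]
  rw [Fin.sum_univ_two, Fin.sum_univ_two]
  have hlogb2 : Real.logb 2 2 = 1 := by rw [Real.logb, div_self (Real.log_pos (by norm_num)).ne']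
  have hL2 : (0:ℝ) < Real.log 2 := Real.log_pos (by norm_num)
  have key : 9 * Real.log 3 < 7 * Real.log 7 := by
    have : Real.log (3 ^ 9 : ℝ) < Real.log (7 ^ 7 : ℝ) :=
      Real.log_lt_log (by norm_num) (by norm_num)
    rwa [Real.log_pow, Real.log_pow] at this; 
  have e1 : (![1 / 8, 7 / 8] : Fin 2 → ℝ) 0 = 1/8 := rfl
  simp only [Matrix.cons_val_zero, Matrix.cons_val_one, Matrix.head_cons, hlogb2]
  have h1 : ((1:ℝ)/8) / (7/8) = 1/7 := by norm_num
  have h2 : ((7:ℝ)/8) / (1/8) = 7 := by norm_num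
  have h3 : ((9:ℝ)/16) / (7/8) = 9/14 := by norm_num
  have h4 : ((7:ℝ)/16) / (1/8) = 7/2 := by norm_num
  rw [h1, h2, h3, h4]
  have l1 : Real.logb 2 (1/7) = - Real.log 7 / Real.log 2 := by
    rw [Real.logb, Real.log_div one_ne_zero (by norm_num)]; simp
  have l2 : Real.logb 2 7 = Real.log 7 / Real.log 2 := rfl
  have l3 : Real.logb 2 (9/14) = (2 * Real.log 3 - Real.log 2 - Real.log 7) / Real.log 2 := by
    rw [Real.logb, Real.log_div (by norm_num) (by norm_num)]
    have : (9:ℝ) = 3 ^ 2 := by norm_num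
    rw [this, Real.log_pow, show (14:ℝ) = 2 * 7 by norm_num,
      Real.log_mul (by norm_num) (by norm_num)]
    ring_nf
  have l4 : Real.logb 2 (7/2) = (Real.log 7 - Real.log 2) / Real.log 2 := by
    rw [Real.logb, Real.log_div (by norm_num) (by norm_num)]
  rw [l1, l2, l3, l4]
  have hne : Real.log 2 ≠ 0 := hL2.ne'
   
  field_simp
  nlinarith [mul_lt_mul_of_pos_right key (mul_pos hL2 hL2)]
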